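/- There is a total function f : ω → ω such that deg_s(C_{graph(f)}) is nonzero (C_{graph(f)} has no recursive member) and C_{graph(f)} <_s E_{graph(f)}, i.e., C_{graph(f)} ≤_s E_{graph(f)} but E_{graph(f)} ≰_s C_{graph(f)}. -/

import Mathlib

/-!  Common definitions: mass problems in Baire space, Medvedev reducibility,
enumeration reducibility, trees, and related notions. -/

/-- A Turing functional, given by a monotone partial recursive map taking a
finite initial segment of the oracle and an input to an output value. -/
structure TuringFunctional where
  app : List ℕ × ℕ →. ℕ
  partrec : Partrec app
  mono : ∀ {σ τ : List ℕ} {n y : ℕ}, σ <+: τ → y ∈ app (σ, n) → y ∈ app (τ, n)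

/-- `Φ.Total g f` means that `Φ(g)` is total and equals `f`. -/
def TuringFunctional.Total (Φ : TuringFunctional) (g f : ℕ → ℕ) : Prop :=
  ∀ n, ∃ k, f n ∈ Φ.app ((List.range k).map g, n)

/-- Medvedev reducibility `A ≤ₛ B` between mass problems. -/
def MedvedevLE (A B : Set (ℕ → ℕ)) : Prop :=
  ∃ Φ : TuringFunctional, ∀ g ∈ B, ∃ f, Φ.Total g f ∧ f ∈ A

/-- Medvedev equivalence. -/
def MedvedevEquiv (A B : Set (ℕ → ℕ)) : Prop := MedvedevLE A B ∧ MedvedevLE B A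

/-- The problem of enumerability of `A`: all functions with range `A`. -/
def EProb (A : Set ℕ) : Set (ℕ → ℕ) := {f | Set.range f = A}

/-- The graph of `f`, coded as a set of naturals via the pairing function. -/
def graphSet (f : ℕ → ℕ) : Set ℕ := Set.range fun n => Nat.pair n (f n)

/-- The `e`-th enumeration operator applied to a set `B`:
`x` is enumerated iff for some (code `u` of a) finite list contained in `B`,
the `e`-th partial recursive function halts on `⟨x, u⟩`. -/
def enumOpApply (e : ℕ) (B : Set ℕ) : Set ℕ :=
  {x | ∃ u : ℕ, ((Denumerable.ofNat Nat.Partrec.Code e).eval (Nat.pair x u)).Dom ∧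
        ∀ y ∈ Denumerable.ofNat (List ℕ) u, y ∈ B}

/-- Enumeration reducibility between subsets of `ℕ`. -/
def EnumLE (A B : Set ℕ) : Prop := ∃ e : ℕ, enumOpApply e B = A

/-- Enumeration equivalence. -/
def EnumEquiv (A B : Set ℕ) : Prop := EnumLE A B ∧ EnumLE B A

/-- `A` is recursively enumerable: it is the domain of a partial recursive function. -/
def REset (A : Set ℕ) : Prop := ∃ c : Nat.Partrec.Code, A = {x | (c.eval x).Dom}

/-- `A` is quasiminimal: not r.e., and every total function whose graph
enumeration-reduces to `A` is recursive. -/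
def Quasiminimal (A : Set ℕ) : Prop :=
  ¬ REset A ∧ ∀ f : ℕ → ℕ, EnumLE (graphSet f) A → Computable f

/-- `A` (as a set) has cototal enumeration degree. -/
def CototalDeg (A : Set ℕ) : Prop := ∃ B : Set ℕ, EnumEquiv B A ∧ EnumLE B Bᶜ

/-- The set `K_A = {⟨e,x⟩ : x ∈ Ψ_e(A)}`. -/
def Kset (A : Set ℕ) : Set ℕ := {p | p.unpair.2 ∈ enumOpApply p.unpair.1 A}

/-- The skip of `A`. -/
def skipSet (A : Set ℕ) : Set ℕ := (Kset A)ᶜ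

/-- The recursive join of two subsets of `ℕ`. -/
def joinSet (A B : Set ℕ) : Set ℕ :=
  {n | (n % 2 = 0 ∧ n / 2 ∈ A) ∨ (n % 2 = 1 ∧ n / 2 ∈ B)}

/-- `A` is recursively enumerable in (the characteristic function of) `X`,
i.e. `A ≤ₑ X ⊕ Xᶜ`. -/
def REin (A X : Set ℕ) : Prop := EnumLE A (joinSet X Xᶜ)

/-- Trees: subsets of `ω^{<ω}` closed under initial segments. -/
def IsTree (T : Set (List ℕ)) : Prop := ∀ ⦃σ τ : List ℕ⦄, σ <+: τ → τ ∈ T → σ ∈ T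

/-- A leaf of `T`: a node with no proper extension in `T`. -/
def IsLeaf (T : Set (List ℕ)) (σ : List ℕ) : Prop :=
  σ ∈ T ∧ ∀ τ ∈ T, σ <+: τ → τ = σ

/-- `T` has no leaves. -/
def NoLeaves (T : Set (List ℕ)) : Prop := ∀ σ ∈ T, ¬ IsLeaf T σ

/-- `T` is finitely branching. -/
def FinBranching (T : Set (List ℕ)) : Prop := ∀ σ ∈ T, {n : ℕ | σ ++ [n] ∈ T}.Finite

/-- `[T]`: the set of infinite paths through `T`. -/
def Paths (T : Set (List ℕ)) : Set (ℕ → ℕ) := {f | ∀ n, (List.range n).map f ∈ T}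

/-- A tree coded as a subset of `ℕ`. -/
def codeTree (T : Set (List ℕ)) : Set ℕ := Encodable.encode '' T

/-- `T` is `h`-bounded. -/
def BoundedTree (h : ℕ → ℕ) (T : Set (List ℕ)) : Prop :=
  ∀ σ ∈ T, ∀ i : ℕ, ∀ hi : i < σ.length, σ.get ⟨i, hi⟩ < h i

/-- A uniformly e-pointed tree with respect to functions. -/
def UEPfun (T : Set (List ℕ)) : Prop :=
  IsTree T ∧ FinBranching T ∧ NoLeaves T ∧
    ∃ e : ℕ, ∀ g ∈ Paths T, enumOpApply e (graphSet g) = codeTree T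

/-- A uniformly e-pointed tree with respect to sets (a subtree of `2^{<ω}`). -/
def UEPset (T : Set (List ℕ)) : Prop :=
  IsTree T ∧ (∀ σ ∈ T, ∀ i ∈ σ, i ≤ 1) ∧ NoLeaves T ∧
    ∃ e : ℕ, ∀ g ∈ Paths T, enumOpApply e {n | g n = 1} = codeTree T

/-- Prepend `i` to a function. -/
def consFun (i : ℕ) (f : ℕ → ℕ) : ℕ → ℕ := fun n => Nat.casesOn n i fun m => f m

/-- The mass problem `0⌢A ∪ 1⌢B`, representing the meet of the degrees of `A` and `B`. -/
def meetProb (A B : Set (ℕ → ℕ)) : Set (ℕ → ℕ) := consFun 0 '' A ∪ consFun 1 '' B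

/-- A mass problem has meet-irreducible Medvedev degree: its degree is not the
meet of two strictly larger degrees. -/
def MeetIrred (X : Set (ℕ → ℕ)) : Prop :=
  ¬ ∃ B C : Set (ℕ → ℕ), MedvedevEquiv (meetProb B C) X ∧
      (MedvedevLE X B ∧ ¬ MedvedevLE B X) ∧ (MedvedevLE X C ∧ ¬ MedvedevLE C X)

/-- `σ` is an initial segment of `f`. -/
def strPrefix (σ : List ℕ) (f : ℕ → ℕ) : Prop := (List.range σ.length).map f = σ

/-- A uniform mass problem. -/
def UniformProb (A : Set (ℕ → ℕ)) : Prop :=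
  ∀ σ : List ℕ, (∃ f ∈ A, strPrefix σ f) → MedvedevLE {f | f ∈ A ∧ strPrefix σ f} A

/-- The `{0,1}`-valued diagonally nonrecursive functions. -/
def DNR2 : Set (ℕ → ℕ) :=
  {f | (∀ n, f n ≤ 1) ∧
    ∀ e y : ℕ, y ∈ (Denumerable.ofNat Nat.Partrec.Code e).eval e → f e ≠ y}

/-- `C_A`: injective enumerations of subsets of `A`. -/
def CProb (A : Set ℕ) : Set (ℕ → ℕ) :=
  {f | Function.Injective f ∧ Set.range f ⊆ A}


/-! ### Auxiliary material for `stmt6` -/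

namespace Stmt6Aux

open Classical

/-- One step of the "first occurrences" fold. -/
def foStep (acc : List ℕ) (a : ℕ) : List ℕ := if a ∈ acc then acc else acc ++ [a]

/-- The list of first occurrences of elements of `l`, in order. -/
def firstOccs (l : List ℕ) : List ℕ := l.foldl foStep []

lemma foStep_prefix (acc : List ℕ) (a : ℕ) : acc <+: foStep acc a := by
  unfold foStep
  by_cases h : a ∈ acc
  · simp [h]
  · exact ⟨[a], by simp [h]⟩

lemma foldl_prefix : ∀ (l acc : List ℕ), acc <+: l.foldl foStep acc
  | [], _ => List.prefix_refl _
  | a :: l, acc => (foStep_prefix acc a).trans (foldl_prefix l (foStep acc a))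

lemma firstOccs_prefix {σ τ : List ℕ} (h : σ <+: τ) : firstOccs σ <+: firstOccs τ := by
  obtain ⟨t, rfl⟩ := h
  unfold firstOccs
  rw [List.foldl_append]
  exact foldl_prefix t _

lemma mem_foStep {acc : List ℕ} {a x : ℕ} : x ∈ foStep acc a ↔ x ∈ acc ∨ x = a := by
  by_cases h : a ∈ acc
  · simp only [foStep, if_pos h]
    exact ⟨Or.inl, fun h' => h'.elim id fun hx => hx ▸ h⟩
  · simp [foStep, if_neg h]

lemma mem_foldl : ∀ (l acc : List ℕ) (x : ℕ), x ∈ l.foldl foStep acc ↔ x ∈ acc ∨ x ∈ l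
  | [], acc, x => by simp
  | a :: l, acc, x => by
    rw [List.foldl_cons, mem_foldl l _ x, mem_foStep]
    simp only [List.mem_cons]
    tauto

lemma mem_firstOccs {l : List ℕ} {x : ℕ} : x ∈ firstOccs l ↔ x ∈ l := by
  rw [firstOccs, mem_foldl]; simp

lemma nodup_foldl : ∀ (l acc : List ℕ), acc.Nodup → (l.foldl foStep acc).Nodup
  | [], _, h => h
  | a :: l, acc, h => by
    rw [List.foldl_cons]
    apply nodup_foldl
    by_cases ha : a ∈ acc
    · simpa [foStep, if_pos ha] using h
    · rw [foStep, if_neg ha]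
      simp [List.nodup_append, h, ha]
      exact fun x hx hxa => ha (hxa ▸ hx)

lemma firstOccs_nodup (l : List ℕ) : (firstOccs l).Nodup := nodup_foldl l [] List.nodup_nil

lemma primrec_foStep : Primrec (fun p : List ℕ × ℕ => foStep p.1 p.2) := by
  have h1 : Primrec (fun p : List ℕ × ℕ =>
      if List.idxOf p.2 p.1 < p.1.length then p.1 else p.1 ++ [p.2]) :=
    Primrec.ite (Primrec.nat_lt.comp (Primrec.list_idxOf.comp Primrec.snd Primrec.fst)
        (Primrec.list_length.comp Primrec.fst))
      Primrec.fst (Primrec.list_concat.comp Primrec.fst Primrec.snd)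
  refine h1.of_eq fun p => ?_
  unfold foStep
  by_cases h : p.2 ∈ p.1
  · rw [if_pos h, if_pos (List.idxOf_lt_length_iff.2 h)]
  · rw [if_neg h, if_neg (fun hc => h (List.idxOf_lt_length_iff.1 hc))]

lemma primrec_firstOccs : Primrec firstOccs := by
  have := Primrec.list_foldl (f := fun l : List ℕ => l) (g := fun _ : List ℕ => ([] : List ℕ))
    (h := fun _ p => foStep p.1 p.2) Primrec.id (Primrec.const [])
    (primrec_foStep.comp Primrec.snd).to₂
  exact this.of_eq fun l => rfl

/-- The deduplicating Turing functional. -/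
def dedupPhi : TuringFunctional where
  app := fun p => ((firstOccs p.1)[p.2]? : Part ℕ)
  partrec := Computable.ofOption
    ((Primrec.list_getElem?.comp (primrec_firstOccs.comp Primrec.fst) Primrec.snd).to_comp)
  mono := by
    rintro σ τ n y hpre hy
    rw [Part.mem_ofOption] at hy ⊢
    have hy' : (firstOccs σ)[n]? = some y := hy
    have hlt : n < (firstOccs σ).length := (List.getElem?_eq_some_iff.1 hy').1
    obtain ⟨t, ht⟩ := firstOccs_prefix hpre
    rw [← ht, List.getElem?_append_left hlt]
    exact hy

lemma range_prefix {k k' : ℕ} (h : k ≤ k') : List.range k <+: List.range k' := by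
  have : (List.range k').take k = List.range k := by
    rw [List.take_range]; congr 1; omega
  exact this ▸ List.take_prefix k (List.range k')

lemma prefix_map_range {σ : List ℕ} {f : ℕ → ℕ} (h : strPrefix σ f) {L : ℕ}
    (hL : σ.length ≤ L) : σ <+: (List.range L).map f := by
  have h1 : ((List.range L).map f).take σ.length = σ := by
    rw [← List.map_take, List.take_range]
    have : σ.length ⊓ L = σ.length := by omega
    rw [this, h]
  exact h1 ▸ List.take_prefix _ _

lemma strPrefix_iff {σ : List ℕ} {f : ℕ → ℕ} :
    strPrefix σ f ↔ ∀ i (hi : i < σ.length), f i = σ[i] := by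
  constructor
  · intro h i hi
    have hi' : i < ((List.range σ.length).map f).length := by simpa using hi
    have h2 := congrArg (fun l => l[i]?) h
    simp only [List.getElem?_eq_getElem hi', List.getElem?_eq_getElem hi] at h2
    have e1 : ((List.range σ.length).map f)[i] = f i := by
      simp [List.getElem_map, List.getElem_range]
    rw [← e1]
    exact Option.some.inj h2
  · intro h
    refine List.ext_getElem (by simp) fun i h1 h2 => ?_
    simp only [List.getElem_map, List.getElem_range]
    exact h i h2

lemma strPrefix_map_range_eval {L : ℕ} {f₁ f : ℕ → ℕ}
    (h : strPrefix ((List.range L).map f₁) f) {i : ℕ} (hi : i < L) : f i = f₁ i := by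
  have hl : i < ((List.range L).map f₁).length := by simpa using hi
  rw [strPrefix_iff.1 h i hl]
  simp [List.getElem_map, List.getElem_range]

lemma isOpen_cyl (σ : List ℕ) : IsOpen {f : ℕ → ℕ | strPrefix σ f} := by
  have he : {f : ℕ → ℕ | strPrefix σ f} =
      ⋂ i : Fin σ.length, (fun f : ℕ → ℕ => f i) ⁻¹' {σ.get i} := by
    ext f
    simp only [Set.mem_iInter, Set.mem_preimage, Set.mem_singleton_iff, strPrefix_iff,
      List.get_eq_getElem]
    exact ⟨fun h i => h i i.isLt, fun h i hi => h ⟨i, hi⟩⟩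
  rw [he]
  exact isOpen_iInter_of_finite fun i =>
    IsOpen.preimage (continuous_apply _) (isOpen_discrete _)

lemma exists_cyl_subset {U : Set (ℕ → ℕ)} (hU : IsOpen U) {x : ℕ → ℕ} (hx : x ∈ U) :
    ∃ n : ℕ, ∀ y : ℕ → ℕ, (∀ i < n, y i = x i) → y ∈ U := by
  obtain ⟨I, u, hu, hsub⟩ := isOpen_pi_iff.1 hU x hx
  refine ⟨I.sup id + 1, fun y hy => hsub fun i hi => ?_⟩
  have hin : i < I.sup id + 1 := Nat.lt_succ_of_le (Finset.le_sup (f := id) hi)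
  rw [hy i hin]
  exact (hu i hi).2

lemma dense_compl_closure {S : Set (ℕ → ℕ)}
    (H : ∀ σ : List ℕ, ∃ τ : List ℕ, σ <+: τ ∧ ∀ f, strPrefix τ f → f ∉ S) :
    Dense (closure S)ᶜ := by
  rw [dense_iff_inter_open]
  rintro U hU ⟨x, hx⟩
  obtain ⟨n, hn⟩ := exists_cyl_subset hU hx
  obtain ⟨τ, hpre, hτ⟩ := H ((List.range n).map x)
  have hlen : n ≤ τ.length := by simpa using hpre.length_le
  set fτ : ℕ → ℕ := fun i => τ.getD i 0 with hfτ
  have hfpre : strPrefix τ fτ := by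
    refine List.ext_getElem (by simp) fun i h1 h2 => ?_
    simp only [List.getElem_map, List.getElem_range]
    exact List.getD_eq_getElem τ 0 h2
  refine ⟨fτ, ?_, ?_⟩
  · apply hn
    intro i hi
    have hiτ : i < τ.length := lt_of_lt_of_le hi hlen
    have h1 : τ[i] = ((List.range n).map x)[i]'(by simpa using hi) :=
      (hpre.getElem (by simpa using hi)).symm
    have h2 : fτ i = τ[i] := List.getD_eq_getElem τ 0 hiτ
    rw [h2, h1]
    simp [List.getElem_map, List.getElem_range]
  · intro hc
    rw [mem_closure_iff] at hc
    obtain ⟨z, hzo, hzS⟩ := hc {f : ℕ → ℕ | strPrefix τ f} (isOpen_cyl τ) hfpre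
    exact hτ z hzo hzS

/-- The even-part injective enumeration of the graph of `f`. -/
def gev (f : ℕ → ℕ) : ℕ → ℕ := fun m => Nat.pair (2 * m) (f (2 * m))

lemma gev_injective (f : ℕ → ℕ) : Function.Injective (gev f) := by
  intro a b h
  have := congrArg (fun n => n.unpair.1) h
  simp only [gev, Nat.unpair_pair] at this
  omega

lemma graphSet_infinite (f : ℕ → ℕ) : (graphSet f).Infinite := by
  apply Set.infinite_range_of_injective
  intro a b h
  have := congrArg (fun n => n.unpair.1) h
  simpa [Nat.unpair_pair] using this

/-- Decoded partial functional of a code. -/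
def Fc (c : Nat.Partrec.Code) : List ℕ × ℕ →. ℕ := fun p => c.eval (Encodable.encode p)

/-- Monotonicity of the decoded functional. -/
def MonoC (c : Nat.Partrec.Code) : Prop :=
  ∀ ⦃σ τ : List ℕ⦄ ⦃n y : ℕ⦄, σ <+: τ → y ∈ Fc c (σ, n) → y ∈ Fc c (τ, n)

/-- `f` is bad for requirement 1 at code `c`. -/
def Bad1 (c : Nat.Partrec.Code) : Set (ℕ → ℕ) :=
  {f | ∃ g : ℕ → ℕ, (∀ n, g n ∈ c.eval n) ∧ Function.Injective g ∧ Set.range g ⊆ graphSet f}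

/-- `f` is bad for requirement 3 at code `c`. -/
def Bad3 (c : Nat.Partrec.Code) : Set (ℕ → ℕ) :=
  {f | MonoC c ∧ ∃ h : ℕ → ℕ,
    (∀ n, ∃ k, h n ∈ Fc c ((List.range k).map (gev f), n)) ∧ Set.range h = graphSet f}

lemma medvedev_C_le_E {A : Set ℕ} (hA : A.Infinite) : MedvedevLE (CProb A) (EProb A) := by
  classical
  refine ⟨dedupPhi, ?_⟩
  intro g hg
  have hg' : Set.range g = A := hg
  have hinf : (Set.range g).Infinite := hg' ▸ hA
  set D : ℕ → List ℕ := fun k => firstOccs ((List.range k).map g) with hD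
  have hpre : ∀ {k k' : ℕ}, k ≤ k' → D k <+: D k' := fun {k k'} hkk =>
    firstOccs_prefix (List.IsPrefix.map g (range_prefix hkk))
  have hlen : ∀ n, ∃ k, n < (D k).length := by
    intro n
    obtain ⟨S, hS, hcard⟩ := hinf.exists_subset_card_eq (n + 1)
    set u : ℕ → ℕ := fun x => if h : ∃ i, g i = x then Nat.find h else 0 with hu
    refine ⟨S.sup u + 1, ?_⟩
    have hsub : S ⊆ ((List.range (S.sup u + 1)).map g).toFinset := by
      intro x hx
      have hex : ∃ i, g i = x := hS hx
      rw [List.mem_toFinset, List.mem_map]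
      refine ⟨Nat.find hex, ?_, Nat.find_spec hex⟩
      rw [List.mem_range]
      have he : u x = Nat.find hex := dif_pos hex
      have := Finset.le_sup (f := u) hx
      omega
    have h1 : n + 1 ≤ ((List.range (S.sup u + 1)).map g).toFinset.card :=
      hcard ▸ Finset.card_le_card hsub
    have h2 : (D (S.sup u + 1)).length = ((List.range (S.sup u + 1)).map g).toFinset.card := by
      rw [← List.toFinset_card_of_nodup (firstOccs_nodup _)]
      congr 1
      ext x
      simp [hD, List.mem_toFinset, mem_firstOccs]
    omega
  choose kOf hkOf using hlen
  set h : ℕ → ℕ := fun n => (D (kOf n)).getD n 0 with hh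
  have hstep : ∀ {k1 k2 : ℕ}, k1 ≤ k2 → ∀ {n}, n < (D k1).length →
      (D k1).getD n 0 = (D k2).getD n 0 := by
    intro k1 k2 hk n hn
    obtain ⟨t, ht⟩ := hpre hk
    rw [← ht, List.getD_append _ _ _ _ hn]
  have agree : ∀ k n, n < (D k).length → (D k).getD n 0 = h n := by
    intro k n hn
    rcases le_total k (kOf n) with hle | hle
    · exact hstep hle hn
    · exact (hstep hle (hkOf n)).symm
  refine ⟨h, ?_, ?_, ?_⟩
  · intro n
    refine ⟨kOf n, ?_⟩
    show h n ∈ ((firstOccs ((List.range (kOf n)).map g))[n]? : Part ℕ)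
    rw [Part.mem_ofOption]
    have hn := hkOf n
    have : (D (kOf n))[n]? = some (h n) := by
      rw [List.getElem?_eq_getElem hn]
      exact congrArg some (List.getD_eq_getElem _ _ hn).symm
    exact this
  · intro n m hnm
    set K := max (kOf n) (kOf m) with hK
    have hn : n < (D K).length :=
      lt_of_lt_of_le (hkOf n) (hpre (le_max_left _ _)).length_le
    have hm : m < (D K).length :=
      lt_of_lt_of_le (hkOf m) (hpre (le_max_right _ _)).length_le
    have en : (D K)[n] = h n := by
      have := agree K n hn
      rwa [List.getD_eq_getElem _ _ hn] at this
    have em : (D K)[m] = h m := by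
      have := agree K m hm
      rwa [List.getD_eq_getElem _ _ hm] at this
    have hd := List.nodup_iff_injective_get.1 (firstOccs_nodup ((List.range K).map g))
    have : (⟨n, hn⟩ : Fin (D K).length) = ⟨m, hm⟩ := by
      apply hd
      show (D K).get ⟨n, hn⟩ = (D K).get ⟨m, hm⟩
      simp only [List.get_eq_getElem]
      rw [en, em]
      exact hnm
    simpa using congrArg Fin.val this
  · rintro y ⟨n, rfl⟩
    have hn := hkOf n
    have hmem : h n ∈ D (kOf n) := by
      have h3 : (D (kOf n))[n] = h n := by
        have := agree _ n hn
        rwa [List.getD_eq_getElem _ _ hn] at this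
      exact h3 ▸ List.getElem_mem hn
    rw [hD] at hmem
    rw [mem_firstOccs, List.mem_map] at hmem
    obtain ⟨i, _, hi⟩ := hmem
    rw [← hg']
    exact ⟨i, hi⟩

lemma bad1_avoid (c : Nat.Partrec.Code) (σ : List ℕ) :
    ∃ τ : List ℕ, σ <+: τ ∧ ∀ f, strPrefix τ f → f ∉ Bad1 c := by
  classical
  by_cases hg : ∃ g : ℕ → ℕ, ∀ n, g n ∈ c.eval n
  swap
  · exact ⟨σ, List.prefix_refl σ, fun f _ ⟨g, hgc, _, _⟩ => hg ⟨g, hgc⟩⟩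
  obtain ⟨g, hgc⟩ := hg
  have huniq : ∀ g' : ℕ → ℕ, (∀ n, g' n ∈ c.eval n) → g' = g := fun g' hg' =>
    funext fun n => Part.mem_unique (hg' n) (hgc n)
  by_cases hinj : Function.Injective g
  swap
  · exact ⟨σ, List.prefix_refl σ, fun f _ ⟨g', hg', hinj', _⟩ => hinj (huniq g' hg' ▸ hinj')⟩
  by_cases hcoll : ∃ n m : ℕ, n ≠ m ∧ (g n).unpair.1 = (g m).unpair.1
  · refine ⟨σ, List.prefix_refl σ, ?_⟩
    rintro f _ ⟨g', hg', hinj', hsub'⟩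
    rw [huniq g' hg'] at hsub'
    obtain ⟨n, m, hnm, heq⟩ := hcoll
    obtain ⟨a1, ha1⟩ := hsub' ⟨n, rfl⟩
    obtain ⟨a2, ha2⟩ := hsub' ⟨m, rfl⟩
    have e1 : (g n).unpair.1 = a1 := by rw [← ha1, Nat.unpair_pair]
    have e2 : (g m).unpair.1 = a2 := by rw [← ha2, Nat.unpair_pair]
    have : g n = g m := by rw [← ha1, ← ha2, ← e1, ← e2, heq]
    exact hnm (hinj this)
  · have hinj1 : Function.Injective fun n => (g n).unpair.1 := by
      intro n m hnm
      by_contra hne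
      exact hcoll ⟨n, m, hne, hnm⟩
    have hbig : ∃ n0, σ.length ≤ (g n0).unpair.1 := by
      by_contra hall
      push_neg at hall
      refine (Set.infinite_range_of_injective hinj1)
        ((Set.finite_Iio σ.length).subset ?_)
      rintro _ ⟨n, rfl⟩
      exact hall n
    obtain ⟨n0, hn0⟩ := hbig
    set a := (g n0).unpair.1 with ha
    set b := (g n0).unpair.2 with hb
    set f₁ : ℕ → ℕ := fun i => if h : i < σ.length then σ[i] else if i = a then b + 1 else 0
      with hf₁
    have hpre₁ : strPrefix σ f₁ := by
      rw [strPrefix_iff]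
      intro i hi
      simp [hf₁, dif_pos hi]
    refine ⟨(List.range (a + 1)).map f₁, prefix_map_range hpre₁ (by omega), ?_⟩
    rintro f hfp ⟨g', hg', hinj', hsub'⟩
    rw [huniq g' hg'] at hsub'
    obtain ⟨m', hm'⟩ := hsub' ⟨n0, rfl⟩
    have hup := congrArg Nat.unpair hm'
    rw [Nat.unpair_pair] at hup
    have e1 : m' = a := by rw [ha, ← hup]
    have e2 : f m' = b := by rw [hb, ← hup]
    have hfa : f a = b + 1 := by
      rw [strPrefix_map_range_eval hfp (Nat.lt_succ_self a)]
      have h1 : ¬ a < σ.length := by omega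
      simp [hf₁, dif_neg h1]
    rw [e1] at e2
    omega

lemma bad3_avoid (c : Nat.Partrec.Code) (σ : List ℕ) :
    ∃ τ : List ℕ, σ <+: τ ∧ ∀ f, strPrefix τ f → f ∉ Bad3 c := by
  classical
  by_cases hm : MonoC c
  swap
  · exact ⟨σ, List.prefix_refl σ, fun f _ hf => hm hf.1⟩
  by_cases hQ : ∃ f₀ : ℕ → ℕ, strPrefix σ f₀ ∧ ∃ n k y,
      y ∈ Fc c ((List.range k).map (gev f₀), n) ∧ y.unpair.1 % 2 = 1 ∧
        σ.length ≤ y.unpair.1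
  · obtain ⟨f₀, hpre₀, n, k, y, hy, hodd, hge⟩ := hQ
    set a := y.unpair.1 with ha
    set b := y.unpair.2 with hb
    set f₁ : ℕ → ℕ := fun i => if i = a then b + 1 else f₀ i with hf₁
    set L := max (max σ.length (2 * k)) (a + 1) with hL
    have hpre₁ : strPrefix σ f₁ := by
      rw [strPrefix_iff]
      intro i hi
      have hne : i ≠ a := by omega
      have := strPrefix_iff.1 hpre₀ i hi
      simp [hf₁, hne, this]
    refine ⟨(List.range L).map f₁, prefix_map_range hpre₁ (by omega), ?_⟩
    rintro f hfp ⟨-, h, htot, hran⟩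
    have hagree : ∀ i, i < L → f i = f₁ i := fun i hi => strPrefix_map_range_eval hfp hi
    have hlist : (List.range k).map (gev f₀) = (List.range k).map (gev f) := by
      apply List.map_congr_left
      intro m hmk
      rw [List.mem_range] at hmk
      have h2m : 2 * m < L := by omega
      have e1 : f (2 * m) = f₁ (2 * m) := hagree _ h2m
      have hne : 2 * m ≠ a := by omega
      have e2 : f₁ (2 * m) = f₀ (2 * m) := by simp [hf₁, hne]
      simp [gev, e1, e2]
    rw [hlist] at hy
    obtain ⟨k', hk'⟩ := htot n
    have hyK : y ∈ Fc c ((List.range (max k k')).map (gev f), n) :=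
      hm (List.IsPrefix.map _ (range_prefix (le_max_left _ _))) hy
    have hhK : h n ∈ Fc c ((List.range (max k k')).map (gev f), n) :=
      hm (List.IsPrefix.map _ (range_prefix (le_max_right _ _))) hk'
    have hhy : h n = y := Part.mem_unique hhK hyK
    have hyr : y ∈ graphSet f := by rw [← hran]; exact ⟨n, hhy⟩
    obtain ⟨m', hm'⟩ := hyr
    have hup := congrArg Nat.unpair hm'
    rw [Nat.unpair_pair] at hup
    have e1 : m' = a := by rw [ha, ← hup]
    have e2 : f m' = b := by rw [hb, ← hup]
    have hfa : f a = b + 1 := by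
      rw [hagree a (by omega)]
      simp [hf₁]
    rw [e1] at e2
    omega
  · refine ⟨σ, List.prefix_refl σ, ?_⟩
    rintro f hfp ⟨-, h, htot, hran⟩
    set a := 2 * σ.length + 1 with ha
    have hyr : Nat.pair a (f a) ∈ graphSet f := ⟨a, rfl⟩
    rw [← hran] at hyr
    obtain ⟨n, hn⟩ := hyr
    obtain ⟨k, hk⟩ := htot n
    apply hQ
    refine ⟨f, hfp, n, k, h n, hk, ?_, ?_⟩
    · rw [hn, Nat.unpair_pair]; omega
    · rw [hn, Nat.unpair_pair]; omega

end Stmt6Aux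

/-- There is a total `f` such that `C_{graph(f)}` has no recursive member and
`C_{graph(f)} <ₛ E_{graph(f)}`. -/
theorem stmt6 :
    ∃ f : ℕ → ℕ,
      (¬ ∃ g ∈ CProb (graphSet f), Computable g) ∧
      MedvedevLE (CProb (graphSet f)) (EProb (graphSet f)) ∧
      ¬ MedvedevLE (EProb (graphSet f)) (CProb (graphSet f)) := by
  classical
  open Stmt6Aux in
  have hopen : ∀ p : Nat.Partrec.Code × Bool,
      IsOpen (closure (if p.2 then Bad1 p.1 else Bad3 p.1))ᶜ :=
    fun p => isClosed_closure.isOpen_compl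
  have hdense : ∀ p : Nat.Partrec.Code × Bool,
      Dense (closure (if p.2 then Bad1 p.1 else Bad3 p.1))ᶜ := by
    rintro ⟨c, b⟩
    cases b
    · simpa using Stmt6Aux.dense_compl_closure (Stmt6Aux.bad3_avoid c)
    · simpa using Stmt6Aux.dense_compl_closure (Stmt6Aux.bad1_avoid c)
  have hD : Dense (⋂ p : Nat.Partrec.Code × Bool,
      (closure (if p.2 then Stmt6Aux.Bad1 p.1 else Stmt6Aux.Bad3 p.1))ᶜ) :=
    dense_iInter_of_isOpen hopen hdense
  obtain ⟨f, hf⟩ := hD.nonempty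
  have hf1 : ∀ c, f ∉ Stmt6Aux.Bad1 c := by
    intro c hc
    have := Set.mem_iInter.1 hf (c, true)
    exact this (subset_closure (by simpa using hc))
  have hf3 : ∀ c, f ∉ Stmt6Aux.Bad3 c := by
    intro c hc
    have := Set.mem_iInter.1 hf (c, false)
    exact this (subset_closure (by simpa using hc))
  refine ⟨f, ?_, ?_, ?_⟩
  · rintro ⟨g, ⟨hginj, hgsub⟩, hgcomp⟩
    have hp : Nat.Partrec fun n => Part.some (g n) := Partrec.nat_iff.1 hgcomp
    obtain ⟨c, hc⟩ := Nat.Partrec.Code.exists_code.1 hp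
    refine hf1 c ⟨g, fun n => ?_, hginj, hgsub⟩
    rw [hc]
    exact Part.mem_some _
  · exact Stmt6Aux.medvedev_C_le_E (Stmt6Aux.graphSet_infinite f)
  · rintro ⟨Φ, hΦ⟩
    have hmemC : Stmt6Aux.gev f ∈ CProb (graphSet f) := by
      refine ⟨Stmt6Aux.gev_injective f, ?_⟩
      rintro _ ⟨m, rfl⟩
      exact ⟨2 * m, rfl⟩
    obtain ⟨h, hT, hE⟩ := hΦ (Stmt6Aux.gev f) hmemC
    obtain ⟨c, hc⟩ := Nat.Partrec.Code.exists_code.1 Φ.partrec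
    have key : ∀ (p : List ℕ × ℕ) (y : ℕ), y ∈ Φ.app p ↔ y ∈ Stmt6Aux.Fc c p := by
      intro p y
      have h1 : Stmt6Aux.Fc c p = (Φ.app p).map Encodable.encode := by
        show c.eval (Encodable.encode p) = _
        rw [hc]
        simp only [Encodable.encodek, Part.coe_some, Part.bind_some]
      rw [h1]
      simp [Part.mem_map_iff]
    refine hf3 c ⟨?_, h, ?_, hE⟩
    · intro σ τ n y hpre hy
      exact (key _ _).1 (Φ.mono hpre ((key _ _).2 hy))
    · intro n
      obtain ⟨k, hk⟩ := hT n
      exact ⟨k, (key _ _).1 hk⟩
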